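/- arXiv:2103.03237 — 3 statements merged into one kernel-verified Lean document; each statement's English description precedes it below -/
import Mathlib

section
/- Let $\widehat{\Sigma} \in \mathbb{R}^{d\times d}$ be a symmetric positive semidefinite matrix with orthogonal decomposition $\widehat{\Sigma} = \sum_{k=1}^d s_k u_k u_k^\top$ (with $s_k \geq 0$ eigenvalues and $u_k$ orthonormal eigenvectors), and let $\lambda \geq 0$. Then the matrix $\widehat{\Sigma}^\lambda = \sum_{k=1}^d \max\{s_k - \lambda/2, 0\} u_k u_k^\top$ is the unique minimizer over all $A \in \mathbb{R}^{d\times d}$ of the function $L(A) = \|\widehat{\Sigma} - A\|_2^2 + \lambda \|A\|_1$, where $\|\cdot\|_2$ is the Frobenius norm and $\|\cdot\|_1$ the nuclear norm (sum of singular values). -/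
open Matrix MeasureTheory Finset

/-- Singular values of a real matrix (as square roots of the eigenvalues of `Aᴴ * A`),
indexed by columns; not necessarily sorted. -/
noncomputable def sval {m q : ℕ} (A : Matrix (Fin m) (Fin q) ℝ) (k : Fin q) : ℝ :=
  Real.sqrt ((Matrix.isHermitian_conjTranspose_mul_self A).eigenvalues k)

/-- Nuclear (Schatten-1) norm: sum of singular values. -/
noncomputable def nucNorm {m q : ℕ} (A : Matrix (Fin m) (Fin q) ℝ) : ℝ :=
  ∑ k, sval A k

/-- Frobenius (Schatten-2) norm. -/
noncomputable def frobNorm {m q : ℕ} (A : Matrix (Fin m) (Fin q) ℝ) : ℝ :=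
  Real.sqrt (Matrix.trace (Aᴴ * A))

/-- Spectral norm: largest singular value. -/
noncomputable def specNorm {m q : ℕ} (A : Matrix (Fin m) (Fin q) ℝ) : ℝ :=
  ⨆ k, sval A k

/-- `rankAt A ε`: number of singular values of `A` that are `≥ ε`. -/
noncomputable def rankAt {m q : ℕ} (A : Matrix (Fin m) (Fin q) ℝ) (ε : ℝ) : ℕ :=
  Nat.card {k : Fin q // ε ≤ sval A k}

/-- `svalOrd A k`: the `(k+1)`-th largest singular value of `A`. -/
noncomputable def svalOrd {m q : ℕ} (A : Matrix (Fin m) (Fin q) ℝ) (k : Fin q) : ℝ :=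
  sSup {t : ℝ | (k : ℕ) + 1 ≤ rankAt A t}

/-! ### Auxiliary lemmas -/

open Polynomial in
lemma stm_charpoly_conj {d : ℕ} (V W M : Matrix (Fin d) (Fin d) ℝ)
    (hVW : V * W = 1) (hWV : W * V = 1) : (V * M * W).charpoly = M.charpoly := by
  have hmap : ∀ X Y : Matrix (Fin d) (Fin d) ℝ, (X * Y).map (C : ℝ →+* ℝ[X]) = X.map C * Y.map C :=
    fun X Y => Matrix.map_mul
  have h1 : (V.map (C : ℝ →+* ℝ[X])) * (W.map C) = 1 := by rw [← hmap, hVW]; simp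
  have h2 : (W.map (C : ℝ →+* ℝ[X])) * (V.map C) = 1 := by rw [← hmap, hWV]; simp
  have hscal : V.map (C : ℝ →+* ℝ[X]) * Matrix.scalar (Fin d) (X : ℝ[X]) * W.map C
      = Matrix.scalar (Fin d) (X : ℝ[X]) := by
    rw [mul_assoc, (scalar_commute (X : ℝ[X]) (fun r' => Commute.all _ _) (W.map C)).eq,
      ← mul_assoc, h1, one_mul]
  have hch : charmatrix (V * M * W) = V.map C * charmatrix M * W.map C := by
    unfold charmatrix
    rw [Matrix.mul_sub, Matrix.sub_mul, RingHom.mapMatrix_apply, RingHom.mapMatrix_apply,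
      hmap, hmap, hscal]
  rw [Matrix.charpoly, Matrix.charpoly, hch, Matrix.det_mul, Matrix.det_mul, mul_comm,
    ← mul_assoc, ← Matrix.det_mul, h2, Matrix.det_one, one_mul]

open Polynomial in
lemma stm_charpoly_diag {d : ℕ} (c : Fin d → ℝ) :
    (Matrix.diagonal c).charpoly = ∏ k, (X - C (c k)) := by
  rw [Matrix.charpoly]
  have : charmatrix (Matrix.diagonal c) = Matrix.diagonal (fun k => (X : ℝ[X]) - C (c k)) := by
    ext i j
    by_cases h : i = j
    · subst h; simp [charmatrix_apply_eq]
    · simp [charmatrix_apply_ne _ _ _ h, Matrix.diagonal_apply_ne _ h]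
  rw [this, Matrix.det_diagonal]

open Polynomial in
lemma stm_prod_fin_eq_multiset {d : ℕ} (c : Fin d → ℝ) :
    (∏ k, (X - C (c k))) = ((Multiset.map c Finset.univ.val).map (fun a => X - C a)).prod := by
  rw [Multiset.map_map]; rfl

lemma stm_sum_comp_eq {d : ℕ} {a b : Fin d → ℝ}
    (h : Multiset.map a Finset.univ.val = Multiset.map b Finset.univ.val) (f : ℝ → ℝ) :
    ∑ k, f (a k) = ∑ k, f (b k) := by
  have h2 := congrArg Multiset.sum (congrArg (Multiset.map f) h)
  rw [Multiset.map_map, Multiset.map_map] at h2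
  exact h2

open Polynomial in
lemma stm_eig_multiset {d : ℕ} {N : Matrix (Fin d) (Fin d) ℝ} (hN : N.IsHermitian)
    (U : Matrix (Fin d) (Fin d) ℝ) (c : Fin d → ℝ)
    (hU : U * Uᵀ = 1) (hU' : Uᵀ * U = 1) (hNeq : N = Uᵀ * Matrix.diagonal c * U) :
    Multiset.map hN.eigenvalues Finset.univ.val = Multiset.map c Finset.univ.val := by
  have hc1 : N.charpoly = ∏ k, (X - C (c k)) := by
    rw [congrArg Matrix.charpoly hNeq, stm_charpoly_conj Uᵀ U _ hU' hU, stm_charpoly_diag]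
  set V : Matrix (Fin d) (Fin d) ℝ := (hN.eigenvectorUnitary : Matrix (Fin d) (Fin d) ℝ) with hV
  have hsV : star V * V = 1 := hN.eigenvectorUnitary.2.1
  have hVs : V * star V = 1 := hN.eigenvectorUnitary.2.2
  have heq : N = V * Matrix.diagonal hN.eigenvalues * star V := by
    simpa [Function.comp] using hN.spectral_theorem
  have hc2 : N.charpoly = ∏ k, (X - C (hN.eigenvalues k)) := by
    rw [congrArg Matrix.charpoly heq, stm_charpoly_conj V (star V) _ hVs hsV, stm_charpoly_diag]
  have key : (∏ k, (X - C (hN.eigenvalues k))) = ∏ k, (X - C (c k)) := by rw [← hc1, ← hc2]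
  rw [stm_prod_fin_eq_multiset, stm_prod_fin_eq_multiset] at key
  have := congrArg Polynomial.roots key
  rwa [Polynomial.roots_multiset_prod_X_sub_C, Polynomial.roots_multiset_prod_X_sub_C] at this

lemma stm_conjT_eq_T {d e : ℕ} (X : Matrix (Fin d) (Fin e) ℝ) : Xᴴ = Xᵀ := by
  ext i j; simp [Matrix.conjTranspose_apply]

lemma stm_trace_transpose_mul_self {d e : ℕ} (X : Matrix (Fin d) (Fin e) ℝ) :
    Matrix.trace (Xᴴ * X) = ∑ j, ∑ i, (X i j)^2 := by
  rw [stm_conjT_eq_T, Matrix.trace]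
  congr 1; ext j
  simp [Matrix.mul_apply, Matrix.diag, sq]

lemma stm_frobNorm_sq {d e : ℕ} (X : Matrix (Fin d) (Fin e) ℝ) :
    frobNorm X ^ 2 = ∑ j, ∑ i, (X i j)^2 := by
  rw [frobNorm, Real.sq_sqrt, stm_trace_transpose_mul_self]
  rw [stm_trace_transpose_mul_self]
  positivity

lemma stm_frob_conj {d : ℕ} (U : Matrix (Fin d) (Fin d) ℝ) (h1 : U * Uᵀ = 1)
    (X : Matrix (Fin d) (Fin d) ℝ) : frobNorm (Uᵀ * X * U) = frobNorm X := by
  rw [frobNorm, frobNorm]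
  congr 1
  rw [stm_conjT_eq_T, stm_conjT_eq_T]
  have ht : (Uᵀ * X * U)ᵀ = Uᵀ * Xᵀ * U := by
    rw [Matrix.transpose_mul, Matrix.transpose_mul, Matrix.transpose_transpose, Matrix.mul_assoc]
  rw [ht]
  have hm : Uᵀ * Xᵀ * U * (Uᵀ * X * U) = Uᵀ * (Xᵀ * X) * U := by
    calc Uᵀ * Xᵀ * U * (Uᵀ * X * U) = Uᵀ * Xᵀ * (U * Uᵀ) * X * U := by
          simp only [Matrix.mul_assoc]
      _ = Uᵀ * (Xᵀ * X) * U := by rw [h1, Matrix.mul_one]; simp only [Matrix.mul_assoc]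
  rw [hm, Matrix.trace_mul_cycle, ← Matrix.mul_assoc, h1, Matrix.one_mul]

lemma stm_nuc_conj_diag {d : ℕ} (U : Matrix (Fin d) (Fin d) ℝ) (h1 : U * Uᵀ = 1)
    (h2 : Uᵀ * U = 1) (c : Fin d → ℝ) (hc : ∀ k, 0 ≤ c k) :
    nucNorm (Uᵀ * Matrix.diagonal c * U) = ∑ k, c k := by
  set S := Uᵀ * Matrix.diagonal c * U with hS
  have hSt : Sᴴ = S := by
    have h3 : Sᴴ = Sᵀ := by ext i j; simp [Matrix.conjTranspose_apply]
    rw [h3, hS, Matrix.transpose_mul, Matrix.transpose_mul, Matrix.transpose_transpose,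
      Matrix.diagonal_transpose, Matrix.mul_assoc]
  have hprod : Sᴴ * S = Uᵀ * Matrix.diagonal (fun k => c k ^ 2) * U := by
    rw [hSt, hS]
    calc Uᵀ * Matrix.diagonal c * U * (Uᵀ * Matrix.diagonal c * U)
        = Uᵀ * (Matrix.diagonal c * (U * Uᵀ) * Matrix.diagonal c) * U := by
          simp only [Matrix.mul_assoc]
      _ = Uᵀ * Matrix.diagonal (fun k => c k ^ 2) * U := by
          rw [h1, Matrix.mul_one, Matrix.diagonal_mul_diagonal]
          simp only [Matrix.mul_assoc, sq]
  have hmult := stm_eig_multiset (Matrix.isHermitian_conjTranspose_mul_self S) U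
      (fun k => c k ^ 2) h1 h2 hprod
  have hsum := stm_sum_comp_eq hmult Real.sqrt
  rw [nucNorm]
  simp only [sval]
  rw [hsum]
  exact Finset.sum_congr rfl fun k _ => Real.sqrt_sq (hc k)

lemma stm_parseval {d : ℕ} (y : Fin d → Fin d → ℝ)
    (hcomp : ∑ i, Matrix.vecMulVec (y i) (y i) = 1) (v : Fin d → ℝ) :
    ∑ i, (y i ⬝ᵥ v)^2 = v ⬝ᵥ v := by
  have hc2 : ∀ a b, ∑ i, y i a * y i b = (1 : Matrix (Fin d) (Fin d) ℝ) a b := by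
    intro a b; rw [← hcomp]; simp [Matrix.sum_apply, Matrix.vecMulVec_apply]
  have e1 : ∀ i, (y i ⬝ᵥ v)^2 = ∑ a, ∑ b, v a * v b * (y i a * y i b) := by
    intro i; rw [sq, dotProduct, Finset.sum_mul_sum]
    exact Finset.sum_congr rfl fun a _ => Finset.sum_congr rfl fun b _ => by ring
  calc ∑ i, (y i ⬝ᵥ v)^2 = ∑ i, ∑ a, ∑ b, v a * v b * (y i a * y i b) :=
        Finset.sum_congr rfl fun i _ => e1 i
    _ = ∑ a, ∑ b, ∑ i, v a * v b * (y i a * y i b) := by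
        rw [Finset.sum_comm]
        exact Finset.sum_congr rfl fun a _ => Finset.sum_comm
    _ = ∑ a, ∑ b, v a * v b * (1 : Matrix (Fin d) (Fin d) ℝ) a b := by
        refine Finset.sum_congr rfl fun a _ => Finset.sum_congr rfl fun b _ => ?_
        rw [← Finset.mul_sum, hc2]
    _ = v ⬝ᵥ v := by
        simp [Matrix.one_apply, mul_ite, dotProduct]

lemma stm_nuc_ge_diag {d : ℕ} (u : Fin d → Fin d → ℝ)
    (hcomp : ∑ k, Matrix.vecMulVec (u k) (u k) = 1)
    (A : Matrix (Fin d) (Fin d) ℝ) :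
    ∑ k, |u k ⬝ᵥ (A *ᵥ u k)| ≤ nucNorm A := by
  classical
  set hM := Matrix.isHermitian_conjTranspose_mul_self A with hhM
  set lam := hM.eigenvalues with hlamdef
  set y : Fin d → Fin d → ℝ := fun i => ⇑(hM.eigenvectorBasis i) with hy
  have hlam : ∀ i, 0 ≤ lam i := fun i => Matrix.eigenvalues_conjTranspose_mul_self_nonneg A i
  have heig : ∀ i, (Aᴴ * A) *ᵥ y i = lam i • y i := fun i => hM.mulVec_eigenvectorBasis i
  have hycomp : ∑ i, Matrix.vecMulVec (y i) (y i) = 1 := by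
    have h := hM.eigenvectorUnitary.2.2
    ext a b
    rw [← h]
    simp only [Matrix.sum_apply, Matrix.vecMulVec_apply, Matrix.mul_apply, Matrix.star_apply]
    refine Finset.sum_congr rfl fun i _ => ?_
    simp [Matrix.IsHermitian.eigenvectorUnitary_apply]
    rfl
  have hynorm : ∀ i, y i ⬝ᵥ y i = 1 := by
    intro i
    have h1 := hM.eigenvectorBasis.orthonormal.1 i
    have h2 : (y i ⬝ᵥ y i) = ‖hM.eigenvectorBasis i‖^2 := by
      rw [← real_inner_self_eq_norm_sq]
      simp only [dotProduct, PiLp.inner_apply, RCLike.inner_apply, y, conj_trivial]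
    rw [h2, h1]; norm_num
  have hAy : ∀ i, (A *ᵥ y i) ⬝ᵥ (A *ᵥ y i) = lam i := by
    intro i
    have h1 : (A *ᵥ y i) ⬝ᵥ (A *ᵥ y i) = y i ⬝ᵥ ((Aᴴ * A) *ᵥ y i) := by
      rw [← Matrix.mulVec_mulVec, Matrix.dotProduct_mulVec (y i)]
      have hvm : y i ᵥ* Aᴴ = A *ᵥ y i := by
        rw [show (Aᴴ : Matrix (Fin d) (Fin d) ℝ) = Aᵀ from by
          ext a b; simp [Matrix.conjTranspose_apply]]
        exact Matrix.vecMul_transpose A (y i)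
      rw [hvm, dotProduct_comm]
    rw [h1, heig i, dotProduct_smul, smul_eq_mul, hynorm i, mul_one]
  have hdp : ∀ v w : Fin d → ℝ, v ⬝ᵥ w = ∑ a, v a * w a := fun v w => rfl
  have hmv : ∀ (w : Fin d → ℝ) (a : Fin d), (A *ᵥ w) a = ∑ b, A a b * w b := fun w a => rfl
  have key : ∀ (k : Fin d) (b : Fin d), ∑ i, (y i ⬝ᵥ u k) * y i b = u k b := by
    intro k b
    have h1 : ∀ a, (∑ i, y i a * y i b) = (1 : Matrix (Fin d) (Fin d) ℝ) a b := fun a => by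
      rw [← hycomp]; simp [Matrix.sum_apply, Matrix.vecMulVec_apply]
    calc ∑ i, (y i ⬝ᵥ u k) * y i b
        = ∑ i, ∑ a, u k a * (y i a * y i b) := by
          refine Finset.sum_congr rfl fun i _ => ?_
          rw [hdp, Finset.sum_mul]
          exact Finset.sum_congr rfl fun a _ => by ring
      _ = ∑ a, u k a * ∑ i, (y i a * y i b) := by
          rw [Finset.sum_comm]
          exact Finset.sum_congr rfl fun a _ => (Finset.mul_sum _ _ _).symm
      _ = u k b := by
          simp only [h1]
          simp [Matrix.one_apply, mul_ite]
  have hexp : ∀ k, u k ⬝ᵥ (A *ᵥ u k) = ∑ i, (y i ⬝ᵥ u k) * (u k ⬝ᵥ (A *ᵥ y i)) := by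
    intro k
    symm
    calc ∑ i, (y i ⬝ᵥ u k) * (u k ⬝ᵥ (A *ᵥ y i))
        = ∑ i, ∑ a, ∑ b, (y i ⬝ᵥ u k) * (u k a * (A a b * y i b)) := by
          refine Finset.sum_congr rfl fun i _ => ?_
          rw [hdp (u k) (A *ᵥ y i)]
          simp only [hmv, Finset.mul_sum]
      _ = ∑ a, ∑ b, (u k a * A a b) * (∑ i, (y i ⬝ᵥ u k) * y i b) := by
          rw [Finset.sum_comm]
          refine Finset.sum_congr rfl fun a _ => ?_
          rw [Finset.sum_comm]
          refine Finset.sum_congr rfl fun b _ => ?_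
          rw [Finset.mul_sum]
          exact Finset.sum_congr rfl fun i _ => by ring
      _ = ∑ a, ∑ b, (u k a * A a b) * u k b := by simp only [key]
      _ = u k ⬝ᵥ (A *ᵥ u k) := by
          rw [hdp (u k) (A *ᵥ u k)]
          simp only [hmv, Finset.mul_sum]
          exact Finset.sum_congr rfl fun a _ => Finset.sum_congr rfl fun b _ => by ring
  have hper : ∀ i, ∑ k, |y i ⬝ᵥ u k| * |u k ⬝ᵥ (A *ᵥ y i)| ≤ Real.sqrt (lam i) := by
    intro i
    set σ := Real.sqrt (lam i) with hσ
    have hσnn : 0 ≤ σ := Real.sqrt_nonneg _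
    have hσsq : σ^2 = lam i := Real.sq_sqrt (hlam i)
    have hsum1 : ∑ k, (u k ⬝ᵥ (A *ᵥ y i))^2 = lam i := by
      rw [stm_parseval u hcomp (A *ᵥ y i), hAy i]
    have hsum2 : ∑ k, (y i ⬝ᵥ u k)^2 = 1 := by
      have hp := stm_parseval u hcomp (y i)
      rw [hynorm i] at hp
      rw [← hp]
      exact Finset.sum_congr rfl fun k _ => by rw [dotProduct_comm]
    rcases eq_or_lt_of_le (hlam i) with h0 | hpos
    · have hz0 : ∀ k, (u k ⬝ᵥ (A *ᵥ y i)) = 0 := by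
        intro k
        have hz : ∑ k, (u k ⬝ᵥ (A *ᵥ y i))^2 = 0 := by rw [hsum1, ← h0]
        have := (Finset.sum_eq_zero_iff_of_nonneg (fun k _ => sq_nonneg _)).mp hz k (mem_univ k)
        exact pow_eq_zero_iff (n := 2) (by norm_num) |>.mp this
      calc ∑ k, |y i ⬝ᵥ u k| * |u k ⬝ᵥ (A *ᵥ y i)| = 0 := by
            refine Finset.sum_eq_zero fun k _ => ?_
            rw [hz0 k, abs_zero, mul_zero]
        _ ≤ σ := hσnn
    · have hσpos : 0 < σ := Real.sqrt_pos.mpr hpos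
      have hbound : ∀ k, |y i ⬝ᵥ u k| * |u k ⬝ᵥ (A *ᵥ y i)|
          ≤ (u k ⬝ᵥ (A *ᵥ y i))^2 / (2*σ) + σ * (y i ⬝ᵥ u k)^2 / 2 := by
        intro k
        set c := u k ⬝ᵥ (A *ᵥ y i)
        set e := y i ⬝ᵥ u k
        have h1 : 0 ≤ (|c| - σ * |e|)^2 := sq_nonneg _
        have h2 : (|c|)^2 = c^2 := sq_abs c
        have h3 : (|e|)^2 = e^2 := sq_abs e
        rw [div_add_div _ _ (by positivity) (by norm_num : (2:ℝ) ≠ 0),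
          le_div_iff₀ (by positivity)]
        nlinarith [abs_nonneg c, abs_nonneg e]
      calc ∑ k, |y i ⬝ᵥ u k| * |u k ⬝ᵥ (A *ᵥ y i)|
          ≤ ∑ k, ((u k ⬝ᵥ (A *ᵥ y i))^2 / (2*σ) + σ * (y i ⬝ᵥ u k)^2 / 2) :=
            Finset.sum_le_sum fun k _ => hbound k
        _ = (∑ k, (u k ⬝ᵥ (A *ᵥ y i))^2) / (2*σ) + σ * (∑ k, (y i ⬝ᵥ u k)^2) / 2 := by
            rw [Finset.sum_add_distrib, ← Finset.sum_div, Finset.mul_sum, ← Finset.sum_div]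
        _ = lam i / (2*σ) + σ * 1 / 2 := by rw [hsum1, hsum2]
        _ = σ := by
            rw [← hσsq]; field_simp; ring
  calc ∑ k, |u k ⬝ᵥ (A *ᵥ u k)|
      ≤ ∑ k, ∑ i, |y i ⬝ᵥ u k| * |u k ⬝ᵥ (A *ᵥ y i)| := by
        refine Finset.sum_le_sum fun k _ => ?_
        rw [hexp k]
        refine le_trans (Finset.abs_sum_le_sum_abs _ _) ?_
        exact Finset.sum_le_sum fun i _ => le_of_eq (abs_mul _ _)
    _ = ∑ i, ∑ k, |y i ⬝ᵥ u k| * |u k ⬝ᵥ (A *ᵥ y i)| := Finset.sum_comm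
    _ ≤ ∑ i, Real.sqrt (lam i) := Finset.sum_le_sum fun i _ => hper i
    _ = nucNorm A := rfl

lemma stm_soft_scalar_lt (s lam b : ℝ) (hs : 0 ≤ s) (hlam : 0 ≤ lam)
    (hne : b ≠ max (s - lam / 2) 0) :
    (s - max (s - lam / 2) 0)^2 + lam * max (s - lam / 2) 0 < (s - b)^2 + lam * |b| := by
  rcases le_or_gt (lam / 2) s with h | h
  · have ht : max (s - lam / 2) 0 = s - lam / 2 := max_eq_left (by linarith)
    rw [ht]
    rw [ht] at hne
    have hd : s - b - lam / 2 ≠ 0 := fun hc => hne (by linarith)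
    have h1 : 0 < (s - b - lam / 2)^2 := by positivity
    have h2 : lam * b ≤ lam * |b| := mul_le_mul_of_nonneg_left (le_abs_self b) hlam
    nlinarith
  · have ht : max (s - lam / 2) 0 = 0 := max_eq_right (by linarith)
    rw [ht]
    rw [ht] at hne
    have hb : 0 < |b| := abs_pos.mpr hne
    have h2 : -(s * b) ≥ -(s * |b|) := by
      have := mul_le_mul_of_nonneg_left (le_abs_self b) hs
      linarith
    have h3 : 0 < |b| * (|b| + (lam - 2*s)) := mul_pos hb (by linarith)
    have h4 : |b|^2 = b^2 := sq_abs b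
    nlinarith

lemma stm_soft_scalar_le (s lam b : ℝ) (hs : 0 ≤ s) (hlam : 0 ≤ lam) :
    (s - max (s - lam / 2) 0)^2 + lam * max (s - lam / 2) 0 ≤ (s - b)^2 + lam * |b| := by
  by_cases hb : b = max (s - lam / 2) 0
  · subst hb
    rw [abs_of_nonneg (le_max_right _ _)]
  · exact (stm_soft_scalar_lt s lam b hs hlam hb).le

/-- Soft-thresholding the eigenvalues is the unique minimizer of the
nuclear-norm-penalized least squares problem. -/
theorem soft_thresholding_unique_minimizer {d : ℕ}
    (Shat : Matrix (Fin d) (Fin d) ℝ) (s : Fin d → ℝ) (u : Fin d → (Fin d → ℝ))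
    (hs : ∀ k, 0 ≤ s k)
    (hu : ∀ i j, u i ⬝ᵥ u j = if i = j then (1 : ℝ) else 0)
    (hShat : Shat = ∑ k, s k • Matrix.vecMulVec (u k) (u k))
    (lam : ℝ) (hlam : 0 ≤ lam)
    (Slam : Matrix (Fin d) (Fin d) ℝ)
    (hSlam : Slam = ∑ k, max (s k - lam / 2) 0 • Matrix.vecMulVec (u k) (u k)) :
    (∀ A : Matrix (Fin d) (Fin d) ℝ,
        frobNorm (Shat - Slam) ^ 2 + lam * nucNorm Slam
          ≤ frobNorm (Shat - A) ^ 2 + lam * nucNorm A) ∧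
    (∀ A : Matrix (Fin d) (Fin d) ℝ, A ≠ Slam →
        frobNorm (Shat - Slam) ^ 2 + lam * nucNorm Slam
          < frobNorm (Shat - A) ^ 2 + lam * nucNorm A) := by
  classical
  set t : Fin d → ℝ := fun k => max (s k - lam / 2) 0 with htdef
  have htnn : ∀ k, 0 ≤ t k := fun k => le_max_right _ _
  set U : Matrix (Fin d) (Fin d) ℝ := Matrix.of u with hUdef
  have h1 : U * Uᵀ = 1 := by
    ext i j
    have := hu i j
    rw [dotProduct] at this
    simp [Matrix.mul_apply, Matrix.one_apply, hUdef, this]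
  have h2 : Uᵀ * U = 1 := mul_eq_one_comm.mp h1
  have hcomp : ∑ k, Matrix.vecMulVec (u k) (u k) = 1 := by
    ext a b
    rw [← h2]
    simp [Matrix.sum_apply, Matrix.vecMulVec_apply, Matrix.mul_apply, hUdef, mul_comm]
  have hconv : ∀ c : Fin d → ℝ,
      (∑ k, c k • Matrix.vecMulVec (u k) (u k)) = Uᵀ * Matrix.diagonal c * U := by
    intro c
    ext a b
    rw [Matrix.mul_assoc, Matrix.mul_apply]
    simp only [Matrix.sum_apply, Matrix.smul_apply, Matrix.vecMulVec_apply, smul_eq_mul]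
    refine Finset.sum_congr rfl fun k _ => ?_
    rw [Matrix.diagonal_mul]
    simp [hUdef]
    ring
  have hShat' : Shat = Uᵀ * Matrix.diagonal s * U := by rw [hShat, hconv]
  have hSlam' : Slam = Uᵀ * Matrix.diagonal t * U := by rw [hSlam]; exact hconv t
  -- value at the minimizer
  have hdiff : Shat - Slam = Uᵀ * Matrix.diagonal (fun k => s k - t k) * U := by
    rw [hShat', hSlam', ← Matrix.sub_mul, ← Matrix.mul_sub, Matrix.diagonal_sub]
  have hfrobmin : frobNorm (Shat - Slam) ^ 2 = ∑ k, (s k - t k)^2 := by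
    rw [hdiff, stm_frob_conj U h1, stm_frobNorm_sq]
    simp [Matrix.diagonal_apply, apply_ite (· ^ 2)]
  have hnucmin : nucNorm Slam = ∑ k, t k := by
    rw [hSlam']; exact stm_nuc_conj_diag U h1 h2 t htnn
  have hmin : frobNorm (Shat - Slam) ^ 2 + lam * nucNorm Slam
      = ∑ k, ((s k - t k)^2 + lam * t k) := by
    rw [hfrobmin, hnucmin, Finset.sum_add_distrib, Finset.mul_sum]
  -- general lower bound pieces for arbitrary A
  have hBkk : ∀ (A : Matrix (Fin d) (Fin d) ℝ) (k : Fin d),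
      (U * A * Uᵀ) k k = u k ⬝ᵥ (A *ᵥ u k) := by
    intro A k
    have e1 : ∀ j, (U * A) k j * Uᵀ j k = ∑ m, u k m * (A m j * u k j) := by
      intro j
      rw [Matrix.mul_apply, Finset.sum_mul]
      refine Finset.sum_congr rfl fun m _ => ?_
      simp only [hUdef, Matrix.of_apply, Matrix.transpose_apply]
      ring
    rw [Matrix.mul_apply, Finset.sum_congr rfl (fun j _ => e1 j), Finset.sum_comm, dotProduct]
    refine Finset.sum_congr rfl fun m _ => ?_
    rw [show (A *ᵥ u k) m = ∑ x, A m x * u k x from rfl, Finset.mul_sum]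
  have hAeq : ∀ A : Matrix (Fin d) (Fin d) ℝ, A = Uᵀ * (U * A * Uᵀ) * U := by
    intro A
    calc A = 1 * A * 1 := by rw [Matrix.one_mul, Matrix.mul_one]
      _ = (Uᵀ * U) * A * (Uᵀ * U) := by rw [h2]
      _ = Uᵀ * (U * A * Uᵀ) * U := by simp only [Matrix.mul_assoc]
  have hfrobA : ∀ A : Matrix (Fin d) (Fin d) ℝ,
      frobNorm (Shat - A) ^ 2
        = ∑ k, (s k - (U * A * Uᵀ) k k)^2
          + ∑ k, ∑ l ∈ Finset.univ.erase k, ((U * A * Uᵀ) k l)^2 := by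
    intro A
    set B := U * A * Uᵀ with hB
    have hd2 : Shat - A = Uᵀ * (Matrix.diagonal s - B) * U := by
      rw [hShat']
      conv_lhs => rw [hAeq A]
      rw [← Matrix.sub_mul, ← Matrix.mul_sub]
    rw [hd2, stm_frob_conj U h1, stm_frobNorm_sq, Finset.sum_comm, ← Finset.sum_add_distrib]
    refine Finset.sum_congr rfl fun k _ => ?_
    rw [← Finset.add_sum_erase _ _ (Finset.mem_univ k)]
    congr 1
    · rw [Matrix.sub_apply, Matrix.diagonal_apply_eq]
    · refine Finset.sum_congr rfl fun l hl => ?_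
      rw [Matrix.sub_apply, Matrix.diagonal_apply_ne _ (Finset.ne_of_mem_erase hl).symm]
      ring
  have hoffnn : ∀ A : Matrix (Fin d) (Fin d) ℝ,
      0 ≤ ∑ k, ∑ l ∈ Finset.univ.erase k, ((U * A * Uᵀ) k l)^2 :=
    fun A => Finset.sum_nonneg fun k _ => Finset.sum_nonneg fun l _ => sq_nonneg _
  have hnucA : ∀ A : Matrix (Fin d) (Fin d) ℝ,
      ∑ k, |(U * A * Uᵀ) k k| ≤ nucNorm A := by
    intro A
    have := stm_nuc_ge_diag u hcomp A
    rw [show ∑ k, |(U * A * Uᵀ) k k| = ∑ k, |u k ⬝ᵥ (A *ᵥ u k)| from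
      Finset.sum_congr rfl fun k _ => by rw [hBkk A k]]
    exact this
  -- master bound
  have hmaster : ∀ A : Matrix (Fin d) (Fin d) ℝ,
      (∑ k, ((s k - (U * A * Uᵀ) k k)^2 + lam * |(U * A * Uᵀ) k k|))
        + ∑ k, ∑ l ∈ Finset.univ.erase k, ((U * A * Uᵀ) k l)^2
      ≤ frobNorm (Shat - A) ^ 2 + lam * nucNorm A := by
    intro A
    rw [hfrobA A, Finset.sum_add_distrib]
    have := mul_le_mul_of_nonneg_left (hnucA A) hlam
    rw [Finset.mul_sum] at this
    linarith
  refine ⟨fun A => ?_, fun A hA => ?_⟩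
  · refine le_trans ?_ (hmaster A)
    rw [hmin]
    have hterm : ∀ k, (s k - t k)^2 + lam * t k
        ≤ (s k - (U * A * Uᵀ) k k)^2 + lam * |(U * A * Uᵀ) k k| :=
      fun k => stm_soft_scalar_le (s k) lam _ (hs k) hlam
    calc ∑ k, ((s k - t k)^2 + lam * t k)
        ≤ ∑ k, ((s k - (U * A * Uᵀ) k k)^2 + lam * |(U * A * Uᵀ) k k|) :=
          Finset.sum_le_sum fun k _ => hterm k
      _ ≤ _ := le_add_of_nonneg_right (hoffnn A)
  · -- strict case
    refine lt_of_lt_of_le ?_ (hmaster A)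
    rw [hmin]
    set B := U * A * Uᵀ with hB
    have hBne : B ≠ Matrix.diagonal t := by
      intro hc
      apply hA
      rw [hAeq A, ← hB, hc, ← hSlam']
    by_cases hdiag : ∀ k, B k k = t k
    · -- off-diagonal entry nonzero
      have hex : ∃ k l, k ≠ l ∧ B k l ≠ 0 := by
        by_contra hno
        push_neg at hno
        apply hBne
        ext k l
        by_cases hkl : k = l
        · subst hkl; rw [hdiag k, Matrix.diagonal_apply_eq]
        · rw [hno k l hkl, Matrix.diagonal_apply_ne _ hkl]
      obtain ⟨k0, l0, hkl0, hBkl0⟩ := hex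
      have hoffpos : 0 < ∑ k, ∑ l ∈ Finset.univ.erase k, (B k l)^2 := by
        have h5 : 0 < (B k0 l0)^2 := by positivity
        have h6 : (B k0 l0)^2 ≤ ∑ l ∈ Finset.univ.erase k0, (B k0 l)^2 :=
          Finset.single_le_sum (f := fun l => (B k0 l)^2) (fun l _ => sq_nonneg _)
            (Finset.mem_erase.mpr ⟨Ne.symm hkl0, Finset.mem_univ _⟩)
        have h7 : ∑ l ∈ Finset.univ.erase k0, (B k0 l)^2
            ≤ ∑ k, ∑ l ∈ Finset.univ.erase k, (B k l)^2 :=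
          Finset.single_le_sum (f := fun k => ∑ l ∈ Finset.univ.erase k, (B k l)^2)
            (fun k _ => Finset.sum_nonneg fun l _ => sq_nonneg _) (Finset.mem_univ k0)
        linarith
      have hsum_le : ∑ k, ((s k - t k)^2 + lam * t k)
          ≤ ∑ k, ((s k - B k k)^2 + lam * |B k k|) :=
        Finset.sum_le_sum fun k _ => stm_soft_scalar_le (s k) lam _ (hs k) hlam
      linarith
    · push_neg at hdiag
      obtain ⟨k0, hk0⟩ := hdiag
      have hsum_lt : ∑ k, ((s k - t k)^2 + lam * t k)
          < ∑ k, ((s k - B k k)^2 + lam * |B k k|) := by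
        refine Finset.sum_lt_sum (fun k _ => stm_soft_scalar_le (s k) lam _ (hs k) hlam)
          ⟨k0, Finset.mem_univ k0, stm_soft_scalar_lt (s k0) lam _ (hs k0) hlam hk0⟩
      have := hoffnn A
      rw [← hB] at this
      linarith
end

section
/- Let $\widehat{\Sigma}, \Sigma \in \mathbb{R}^{d\times d}$ and $\lambda > 0$ with $2\|\widehat{\Sigma} - \Sigma\|_\infty \leq \lambda$, where $\|\cdot\|_\infty$ is the spectral norm. Let $\widehat{\Sigma}^\lambda$ be the minimizer of $A \mapsto \|\widehat{\Sigma} - A\|_2^2 + \lambda\|A\|_1$. Then for every matrix $A \in \mathbb{R}^{d\times d}$, $\|\widehat{\Sigma}^\lambda - \Sigma\|_2^2 \leq \|A - \Sigma\|_2^2 + 2\lambda \|A\|_1$. In particular $\|\widehat{\Sigma}^\lambda - \Sigma\|_2^2 \leq 2\lambda\|\Sigma\|_1$. -/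
open Matrix MeasureTheory Finset

lemma sval_nonneg {d : ℕ} (A : Matrix (Fin d) (Fin d) ℝ) (k : Fin d) : 0 ≤ sval A k :=
  Real.sqrt_nonneg _

lemma nucNorm_nonneg {d : ℕ} (A : Matrix (Fin d) (Fin d) ℝ) : 0 ≤ nucNorm A :=
  Finset.sum_nonneg fun k _ => sval_nonneg A k

lemma sval_le_specNorm {d : ℕ} (A : Matrix (Fin d) (Fin d) ℝ) (k : Fin d) :
    sval A k ≤ specNorm A :=
  le_ciSup (Set.Finite.bddAbove (Set.finite_range _)) k

lemma specNorm_nonneg {d : ℕ} (A : Matrix (Fin d) (Fin d) ℝ) : 0 ≤ specNorm A :=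
  Real.iSup_nonneg fun k => sval_nonneg A k

lemma sval_sq {d : ℕ} (A : Matrix (Fin d) (Fin d) ℝ) (k : Fin d) :
    sval A k ^ 2 = (Matrix.isHermitian_conjTranspose_mul_self A).eigenvalues k :=
  Real.sq_sqrt ((Matrix.posSemidef_conjTranspose_mul_self A).eigenvalues_nonneg k)

lemma eigenvalue_le_spec_sq {d : ℕ} (A : Matrix (Fin d) (Fin d) ℝ) (k : Fin d) :
    (Matrix.isHermitian_conjTranspose_mul_self A).eigenvalues k ≤ specNorm A ^ 2 := by
  rw [← sval_sq]
  exact pow_le_pow_left₀ (sval_nonneg A k) (sval_le_specNorm A k) 2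

section spectral
variable {d : ℕ}

lemma spec_diag (B : Matrix (Fin d) (Fin d) ℝ) :
    star ((Matrix.isHermitian_conjTranspose_mul_self B).eigenvectorUnitary : Matrix (Fin d) (Fin d) ℝ)
      * (Bᴴ * B) * ((Matrix.isHermitian_conjTranspose_mul_self B).eigenvectorUnitary : Matrix (Fin d) (Fin d) ℝ)
      = Matrix.diagonal ((Matrix.isHermitian_conjTranspose_mul_self B).eigenvalues) := by
  have := (Matrix.isHermitian_conjTranspose_mul_self B).conjStarAlgAut_star_eigenvectorUnitary
  simpa [RCLike.ofReal_real_eq_id, Unitary.conjStarAlgAut_apply] using this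

lemma unitary_facts (B : Matrix (Fin d) (Fin d) ℝ) :
    star ((Matrix.isHermitian_conjTranspose_mul_self B).eigenvectorUnitary : Matrix (Fin d) (Fin d) ℝ)
      * ((Matrix.isHermitian_conjTranspose_mul_self B).eigenvectorUnitary : Matrix (Fin d) (Fin d) ℝ) = 1
    ∧ ((Matrix.isHermitian_conjTranspose_mul_self B).eigenvectorUnitary : Matrix (Fin d) (Fin d) ℝ)
      * star ((Matrix.isHermitian_conjTranspose_mul_self B).eigenvectorUnitary : Matrix (Fin d) (Fin d) ℝ) = 1 := by
  exact Unitary.mem_iff.mp (Matrix.isHermitian_conjTranspose_mul_self B).eigenvectorUnitary.prop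

/-- column normalization from `Mᴴ M = 1` -/
lemma col_sq_sum (M : Matrix (Fin d) (Fin d) ℝ) (h : star M * M = 1) (k : Fin d) :
    ∑ j, M j k ^ 2 = 1 := by
  have h1 : (star M * M) k k = (1 : Matrix (Fin d) (Fin d) ℝ) k k := by rw [h]
  simpa [Matrix.mul_apply, Matrix.one_apply, sq, Matrix.star_apply] using h1

end spectral

section rayleigh
variable {d : ℕ}

lemma diag_entry_formula (M : Matrix (Fin d) (Fin d) ℝ) (ν : Fin d → ℝ) (k : Fin d) :
    (star M * Matrix.diagonal ν * M) k k = ∑ j, ν j * M j k ^ 2 := by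
  rw [Matrix.mul_apply]
  refine Finset.sum_congr rfl fun j _ => ?_
  rw [Matrix.mul_diagonal]
  simp [Matrix.star_apply, sq]
  ring

lemma rayleigh (E U : Matrix (Fin d) (Fin d) ℝ) (hU : star U * U = 1) (k : Fin d) :
    (star U * (Eᴴ * E) * U) k k ≤ specNorm E ^ 2 := by
  set W : Matrix (Fin d) (Fin d) ℝ :=
    ((Matrix.isHermitian_conjTranspose_mul_self E).eigenvectorUnitary : Matrix (Fin d) (Fin d) ℝ) with hW
  obtain ⟨hW1, hW2⟩ := unitary_facts E
  have hdiag := spec_diag E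
  set ν := (Matrix.isHermitian_conjTranspose_mul_self E).eigenvalues with hν
  have hEE : Eᴴ * E = W * Matrix.diagonal ν * star W := by
    calc Eᴴ * E = (W * star W) * (Eᴴ * E) * (W * star W) := by rw [hW2]; simp [Matrix.mul_assoc]
    _ = W * (star W * (Eᴴ * E) * W) * star W := by simp [Matrix.mul_assoc]
    _ = W * Matrix.diagonal ν * star W := by rw [hdiag]
  set M : Matrix (Fin d) (Fin d) ℝ := star W * U with hM
  have hMunit : star M * M = 1 := by
    have : star M * M = star U * (W * star W) * U := by
      simp [hM, Matrix.mul_assoc]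
    rw [this, hW2]
    simpa [Matrix.mul_assoc] using hU
  have hrw : star U * (Eᴴ * E) * U = star M * Matrix.diagonal ν * M := by
    rw [hEE]
    simp [hM, Matrix.mul_assoc]
  rw [hrw, diag_entry_formula]
  calc ∑ j, ν j * M j k ^ 2 ≤ ∑ j, specNorm E ^ 2 * M j k ^ 2 := by
        refine Finset.sum_le_sum fun j _ => ?_
        exact mul_le_mul_of_nonneg_right (eigenvalue_le_spec_sq E j) (sq_nonneg _)
    _ = specNorm E ^ 2 * ∑ j, M j k ^ 2 := by rw [Finset.mul_sum]
    _ = specNorm E ^ 2 := by rw [col_sq_sum M hMunit k, mul_one]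

end rayleigh

section duality
variable {d : ℕ}

lemma sqrt_cs (x y : Fin d → ℝ) :
    ∑ i, x i * y i ≤ Real.sqrt (∑ i, x i ^ 2) * Real.sqrt (∑ i, y i ^ 2) := by
  have h := Finset.sum_mul_sq_le_sq_mul_sq Finset.univ x y
  calc ∑ i, x i * y i ≤ |∑ i, x i * y i| := le_abs_self _
    _ = Real.sqrt ((∑ i, x i * y i) ^ 2) := (Real.sqrt_sq_eq_abs _).symm
    _ ≤ Real.sqrt ((∑ i, x i ^ 2) * ∑ i, y i ^ 2) := Real.sqrt_le_sqrt h
    _ = _ := Real.sqrt_mul (Finset.sum_nonneg fun i _ => sq_nonneg _) _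

lemma trace_dual (E B : Matrix (Fin d) (Fin d) ℝ) :
    Matrix.trace (Eᴴ * B) ≤ specNorm E * nucNorm B := by
  set U : Matrix (Fin d) (Fin d) ℝ :=
    ((Matrix.isHermitian_conjTranspose_mul_self B).eigenvectorUnitary : Matrix (Fin d) (Fin d) ℝ) with hU
  obtain ⟨hU1, hU2⟩ := unitary_facts B
  set μ := (Matrix.isHermitian_conjTranspose_mul_self B).eigenvalues with hμ
  have hdiag := spec_diag B
  -- trace identity
  have key : Matrix.trace (Eᴴ * B) = ∑ k, ∑ i, (E * U) i k * (B * U) i k := by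
    have h1 : Matrix.trace ((E * U)ᴴ * (B * U)) = Matrix.trace (Eᴴ * B) := by
      rw [Matrix.conjTranspose_mul]
      have : Uᴴ * Eᴴ * (B * U) = Uᴴ * (Eᴴ * B * U) := by simp [Matrix.mul_assoc]
      rw [this, Matrix.trace_mul_comm]
      have : Eᴴ * B * U * Uᴴ = Eᴴ * B * (U * star U) := by
        simp [Matrix.mul_assoc, Matrix.star_eq_conjTranspose]
      rw [this, hU2, Matrix.mul_one]
    rw [← h1, Matrix.trace]
    simp only [Matrix.diag_apply, Matrix.mul_apply, Matrix.conjTranspose_apply, star_trivial]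
  rw [key, nucNorm, Finset.mul_sum]
  refine Finset.sum_le_sum fun k _ => ?_
  -- column norms
  have hBU : ∑ i, (B * U) i k ^ 2 = μ k := by
    have h2 : (B * U)ᴴ * (B * U) = Matrix.diagonal μ := by
      rw [Matrix.conjTranspose_mul, ← hdiag]
      simp [hU, Matrix.mul_assoc, Matrix.star_eq_conjTranspose]
    have h3 : ((B * U)ᴴ * (B * U)) k k = Matrix.diagonal μ k k := by rw [h2]
    simpa [Matrix.mul_apply, Matrix.conjTranspose_apply, Matrix.diagonal_apply_eq, sq, mul_comm] using h3
  have hEU : ∑ i, (E * U) i k ^ 2 ≤ specNorm E ^ 2 := by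
    have h4 := rayleigh E U hU1 k
    have h5 : (star U * (Eᴴ * E) * U) k k = ∑ i, (E * U) i k ^ 2 := by
      have h6 : star U * (Eᴴ * E) * U = (E * U)ᴴ * (E * U) := by
        rw [Matrix.conjTranspose_mul]
        simp [Matrix.mul_assoc, Matrix.star_eq_conjTranspose]
      rw [h6]
      simp [Matrix.mul_apply, Matrix.conjTranspose_apply, sq, mul_comm]
    rwa [h5] at h4
  calc ∑ i, (E * U) i k * (B * U) i k
      ≤ Real.sqrt (∑ i, (E * U) i k ^ 2) * Real.sqrt (∑ i, (B * U) i k ^ 2) :=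
        sqrt_cs _ _
    _ ≤ Real.sqrt (specNorm E ^ 2) * Real.sqrt (μ k) := by
        rw [hBU]
        exact mul_le_mul_of_nonneg_right (Real.sqrt_le_sqrt hEU) (Real.sqrt_nonneg _)
    _ = specNorm E * sval B k := by
        rw [Real.sqrt_sq (specNorm_nonneg E)]
        rfl

end duality

section frob
variable {d : ℕ}

lemma trace_self_nonneg (X : Matrix (Fin d) (Fin d) ℝ) : 0 ≤ Matrix.trace (Xᴴ * X) := by
  rw [Matrix.trace]
  refine Finset.sum_nonneg fun i _ => ?_
  simp only [Matrix.diag_apply, Matrix.mul_apply, Matrix.conjTranspose_apply, star_trivial]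
  exact Finset.sum_nonneg fun j _ => mul_self_nonneg _

lemma frob_sq (X : Matrix (Fin d) (Fin d) ℝ) :
    frobNorm X ^ 2 = Matrix.trace (Xᴴ * X) :=
  Real.sq_sqrt (trace_self_nonneg X)

lemma trace_symm (X Y : Matrix (Fin d) (Fin d) ℝ) :
    Matrix.trace (Yᴴ * X) = Matrix.trace (Xᴴ * Y) := by
  simp only [Matrix.trace, Matrix.diag_apply, Matrix.mul_apply, Matrix.conjTranspose_apply,
    star_trivial]
  exact Finset.sum_congr rfl fun i _ => Finset.sum_congr rfl fun j _ => by ring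

lemma trace_sub_expand (X Y : Matrix (Fin d) (Fin d) ℝ) :
    Matrix.trace ((X - Y)ᴴ * (X - Y))
      = Matrix.trace (Xᴴ * X) - 2 * Matrix.trace (Xᴴ * Y) + Matrix.trace (Yᴴ * Y) := by
  rw [Matrix.conjTranspose_sub, Matrix.sub_mul, Matrix.mul_sub, Matrix.mul_sub,
    Matrix.trace_sub, Matrix.trace_sub, Matrix.trace_sub, trace_symm X Y]
  ring

lemma eig_congr {d : ℕ} {M N : Matrix (Fin d) (Fin d) ℝ} (hM : M.IsHermitian)
    (hN : N.IsHermitian) (h : M = N) : hM.eigenvalues = hN.eigenvalues := by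
  subst h; rfl

lemma nucNorm_neg (A : Matrix (Fin d) (Fin d) ℝ) : nucNorm (-A) = nucNorm A := by
  have h : (-A)ᴴ * (-A) = Aᴴ * A := by simp
  have hs : ∀ k, sval (-A) k = sval A k := by
    intro k
    unfold sval
    rw [congrFun (eig_congr _ _ h) k]
  unfold nucNorm
  exact Finset.sum_congr rfl fun k _ => hs k

end frob

/-- Oracle inequality for the penalized estimator: nuclear-norm bound. -/
theorem oracle_inequality_nuclear {d : ℕ}
    (Shat Sig Slam : Matrix (Fin d) (Fin d) ℝ) (lam : ℝ) (hlam : 0 < lam)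
    (hclose : 2 * specNorm (Shat - Sig) ≤ lam)
    (hmin : ∀ B : Matrix (Fin d) (Fin d) ℝ,
        frobNorm (Shat - Slam) ^ 2 + lam * nucNorm Slam
          ≤ frobNorm (Shat - B) ^ 2 + lam * nucNorm B) :
    (∀ A : Matrix (Fin d) (Fin d) ℝ,
        frobNorm (Slam - Sig) ^ 2 ≤ frobNorm (A - Sig) ^ 2 + 2 * lam * nucNorm A) ∧
    frobNorm (Slam - Sig) ^ 2 ≤ 2 * lam * nucNorm Sig := by
  have main : ∀ A : Matrix (Fin d) (Fin d) ℝ,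
      frobNorm (Slam - Sig) ^ 2 ≤ frobNorm (A - Sig) ^ 2 + 2 * lam * nucNorm A := by
    intro A
    set E := Shat - Sig with hE
    have h := hmin A
    have e1 : Shat - Slam = E - (Slam - Sig) := by rw [hE]; abel
    have e2 : Shat - A = E - (A - Sig) := by rw [hE]; abel
    rw [frob_sq, frob_sq, e1, e2, trace_sub_expand E (Slam - Sig), trace_sub_expand E (A - Sig)] at h
    rw [frob_sq, frob_sq]
    -- linearity of trace in second argument
    have lin1 : Matrix.trace (Eᴴ * (Slam - Sig))
        = Matrix.trace (Eᴴ * Slam) - Matrix.trace (Eᴴ * Sig) := by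
      rw [Matrix.mul_sub, Matrix.trace_sub]
    have lin2 : Matrix.trace (Eᴴ * (A - Sig))
        = Matrix.trace (Eᴴ * A) - Matrix.trace (Eᴴ * Sig) := by
      rw [Matrix.mul_sub, Matrix.trace_sub]
    have hb1 : Matrix.trace (Eᴴ * Slam) ≤ specNorm E * nucNorm Slam := trace_dual E Slam
    have hb2 : -Matrix.trace (Eᴴ * A) ≤ specNorm E * nucNorm A := by
      have := trace_dual E (-A)
      rwa [Matrix.mul_neg, Matrix.trace_neg, nucNorm_neg] at this
    have hNS := nucNorm_nonneg Slam
    have hNA := nucNorm_nonneg A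
    have hprod : 0 ≤ (lam - 2 * specNorm E) * (nucNorm Slam + nucNorm A) :=
      mul_nonneg (by linarith) (by linarith)
    nlinarith [h, lin1, lin2, hb1, hb2, hprod, specNorm_nonneg E]
  refine ⟨main, ?_⟩
  have h := main Sig
  have hzero : frobNorm (Sig - Sig) ^ 2 = 0 := by
    rw [sub_self, frob_sq]
    simp
  rw [hzero] at h
  linarith
end

section
/- Let $\Sigma, \widehat{\Sigma}$ be symmetric positive semidefinite $d\times d$ real matrices with $2\|\widehat{\Sigma} - \Sigma\|_\infty \leq \bar\lambda$, and suppose $\lambda \in (\bar\lambda, s]$ where $s$ is the smallest non-zero eigenvalue of $\Sigma$. Let $\widehat{\Sigma}^\lambda$ be obtained from $\widehat{\Sigma}$ by soft-thresholding its eigenvalues at level $\lambda/2$. Then $\mathrm{rank}(\widehat{\Sigma}^\lambda) = \mathrm{rank}(\Sigma)$. -/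
open Matrix MeasureTheory Finset

section helpers
variable {d : ℕ}

lemma dp_sum (x : Fin d → ℝ) {ι : Type*} (S : Finset ι) (f : ι → Fin d → ℝ) :
    x ⬝ᵥ (∑ k ∈ S, f k) = ∑ k ∈ S, x ⬝ᵥ f k := by
  simp only [dotProduct, Finset.sum_apply, Finset.mul_sum]
  rw [Finset.sum_comm]

lemma sum_dp (x : Fin d → ℝ) {ι : Type*} (S : Finset ι) (f : ι → Fin d → ℝ) :
    (∑ k ∈ S, f k) ⬝ᵥ x = ∑ k ∈ S, f k ⬝ᵥ x := by
  simp only [dotProduct, Finset.sum_apply, Finset.sum_mul]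
  rw [Finset.sum_comm]

/-- Orthonormal family of `d` vectors in `ℝ^d`: expansion of any vector. -/
lemma on_expansion {v : Fin d → Fin d → ℝ}
    (hv : ∀ i j, v i ⬝ᵥ v j = if i = j then (1:ℝ) else 0)
    (x : Fin d → ℝ) : ∑ k, (v k ⬝ᵥ x) • v k = x := by
  classical
  set M : Matrix (Fin d) (Fin d) ℝ := Matrix.of (fun i j => v i j) with hM
  have h1 : M * Mᵀ = 1 := by
    ext i j
    simpa [Matrix.mul_apply, Matrix.one_apply, dotProduct, hM] using hv i j
  have h2 : Mᵀ * M = 1 := mul_eq_one_comm.mp h1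
  have h3 : Mᵀ *ᵥ (M *ᵥ x) = x := by
    rw [Matrix.mulVec_mulVec, h2, Matrix.one_mulVec]
  have h4 : (∑ k, (v k ⬝ᵥ x) • v k) = Mᵀ *ᵥ (M *ᵥ x) := by
    funext i
    have : (Mᵀ *ᵥ (M *ᵥ x)) i = ∑ k, (v k ⬝ᵥ x) * v k i := by
      simp [Matrix.mulVec, dotProduct, hM, mul_comm]
    rw [this]
    simp [Finset.sum_apply]
  rw [h4, h3]

lemma on_parseval {v : Fin d → Fin d → ℝ}
    (hv : ∀ i j, v i ⬝ᵥ v j = if i = j then (1:ℝ) else 0)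
    (x : Fin d → ℝ) : ∑ k, (v k ⬝ᵥ x) ^ 2 = x ⬝ᵥ x := by
  have h : x ⬝ᵥ (∑ k, (v k ⬝ᵥ x) • v k) = x ⬝ᵥ x := by rw [on_expansion hv x]
  rw [← h, dp_sum]
  refine Finset.sum_congr rfl fun k _ => ?_
  rw [dotProduct_smul, smul_eq_mul, dotProduct_comm]
  ring

lemma on_li {v : Fin d → Fin d → ℝ}
    (hv : ∀ i j, v i ⬝ᵥ v j = if i = j then (1:ℝ) else 0) :
    LinearIndependent ℝ v := by
  classical
  rw [linearIndependent_iff']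
  intro t g hg j hj
  have h := congrArg (fun y => v j ⬝ᵥ y) hg
  simp only [dp_sum, dotProduct_smul, hv, smul_eq_mul, mul_ite, mul_one, mul_zero,
    dotProduct_zero, Finset.sum_ite_eq' t j g] at h
  simpa [hj] using h

lemma on_span_dp_zero {v : Fin d → Fin d → ℝ}
    (hv : ∀ i j, v i ⬝ᵥ v j = if i = j then (1:ℝ) else 0)
    (S : Set (Fin d)) {j : Fin d} (hj : j ∉ S) {x : Fin d → ℝ}
    (hx : x ∈ Submodule.span ℝ (v '' S)) : v j ⬝ᵥ x = 0 := by
  induction hx using Submodule.span_induction with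
  | mem y hy =>
    obtain ⟨k, hk, rfl⟩ := hy
    have : j ≠ k := fun h => hj (h ▸ hk)
    simpa [hv j k, this]
  | zero => simp
  | add y z _ _ hy hz => simp [dotProduct_add, hy, hz]
  | smul a y _ hy => simp [dotProduct_smul, hy]

end helpers


section helpers2
variable {d : ℕ}

lemma qf_formula {A : Matrix (Fin d) (Fin d) ℝ} {v : Fin d → Fin d → ℝ} {c : Fin d → ℝ}
    (hv : ∀ i j, v i ⬝ᵥ v j = if i = j then (1:ℝ) else 0)
    (hA : ∀ k, A *ᵥ v k = c k • v k) (x : Fin d → ℝ) :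
    x ⬝ᵥ A *ᵥ x = ∑ k, c k * (v k ⬝ᵥ x) ^ 2 := by
  have hx : A *ᵥ x = ∑ k, (v k ⬝ᵥ x) • (c k • v k) := by
    conv_lhs => rw [← on_expansion hv x]
    have : A *ᵥ (∑ k, (v k ⬝ᵥ x) • v k) = A.mulVecLin (∑ k, (v k ⬝ᵥ x) • v k) := rfl
    rw [this, map_sum]
    refine Finset.sum_congr rfl fun k _ => ?_
    rw [LinearMap.map_smul, Matrix.mulVecLin_apply, hA k]
  rw [hx, dp_sum]
  refine Finset.sum_congr rfl fun k _ => ?_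
  rw [dotProduct_smul, dotProduct_smul, dotProduct_comm]
  simp [smul_eq_mul]
  ring

lemma range_eq {A : Matrix (Fin d) (Fin d) ℝ} {v : Fin d → Fin d → ℝ} {c : Fin d → ℝ}
    (hv : ∀ i j, v i ⬝ᵥ v j = if i = j then (1:ℝ) else 0)
    (hA : ∀ k, A *ᵥ v k = c k • v k) :
    LinearMap.range A.mulVecLin = Submodule.span ℝ (v '' {k | c k ≠ 0}) := by
  apply le_antisymm
  · rintro _ ⟨x, rfl⟩
    have hx : A.mulVecLin x = ∑ k, (v k ⬝ᵥ x) • (c k • v k) := by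
      rw [Matrix.mulVecLin_apply]
      conv_lhs => rw [← on_expansion hv x]
      have : A *ᵥ (∑ k, (v k ⬝ᵥ x) • v k) = A.mulVecLin (∑ k, (v k ⬝ᵥ x) • v k) := rfl
      rw [this, map_sum]
      refine Finset.sum_congr rfl fun k _ => ?_
      rw [LinearMap.map_smul, Matrix.mulVecLin_apply, hA k]
    rw [hx]
    refine Submodule.sum_mem _ fun k _ => ?_
    by_cases hk : c k = 0
    · simp [hk]
    · exact Submodule.smul_mem _ _ (Submodule.smul_mem _ _
        (Submodule.subset_span ⟨k, hk, rfl⟩))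
  · rw [Submodule.span_le]
    rintro _ ⟨k, hk, rfl⟩
    refine ⟨(c k)⁻¹ • v k, ?_⟩
    rw [LinearMap.map_smul, Matrix.mulVecLin_apply, hA k, smul_smul,
      inv_mul_cancel₀ hk, one_smul]

lemma eigbasis_on {B : Matrix (Fin d) (Fin d) ℝ} (hB : B.IsHermitian) (i j : Fin d) :
    ⇑(hB.eigenvectorBasis i) ⬝ᵥ ⇑(hB.eigenvectorBasis j) = if i = j then (1:ℝ) else 0 := by
  have h := orthonormal_iff_ite.mp hB.eigenvectorBasis.orthonormal i j
  simpa [PiLp.inner_apply, dotProduct, RCLike.inner_apply, conj_trivial, mul_comm] using h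

lemma psd_mulVec_eigen {A : Matrix (Fin d) (Fin d) ℝ} (hA : A.PosSemidef) (k : Fin d) :
    A *ᵥ ⇑((Matrix.isHermitian_conjTranspose_mul_self A).eigenvectorBasis k)
      = sval A k • ⇑((Matrix.isHermitian_conjTranspose_mul_self A).eigenvectorBasis k) := by
  set hB := Matrix.isHermitian_conjTranspose_mul_self A with hhB
  set b : Fin d → ℝ := ⇑(hB.eigenvectorBasis k) with hb
  set t : ℝ := sval A k with htdef
  have hAT : Aᵀ = A := by
    rw [← Matrix.conjTranspose_eq_transpose_of_trivial, hA.1]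
  have hps : (Aᵀ * A).PosSemidef := by
    have h := Matrix.posSemidef_conjTranspose_mul_self A
    rwa [Matrix.conjTranspose_eq_transpose_of_trivial] at h
  have hμ0 : 0 ≤ hB.eigenvalues k := hps.eigenvalues_nonneg k
  have ht0 : 0 ≤ t := Real.sqrt_nonneg _
  have ht2 : hB.eigenvalues k = t ^ 2 := by
    rw [htdef, sval, Real.sq_sqrt hμ0]
  have hBb' : (A * A) *ᵥ b = hB.eigenvalues k • b := by
    have hm : Aᴴ * A = A * A := by rw [hA.1]
    rw [← hm]
    exact hB.mulVec_eigenvectorBasis k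
  have hBb : A *ᵥ (A *ᵥ b) = hB.eigenvalues k • b := by
    rw [Matrix.mulVec_mulVec]; exact hBb'
  set y : Fin d → ℝ := A *ᵥ b - t • b with hy
  have hAy : A *ᵥ y = -(t • y) := by
    rw [hy, Matrix.mulVec_sub, Matrix.mulVec_smul, hBb, ht2]
    funext i
    simp only [Pi.sub_apply, Pi.smul_apply, Pi.neg_apply, smul_eq_mul]
    ring
  have h0 : 0 ≤ y ⬝ᵥ (A *ᵥ y) := by simpa using hA.dotProduct_mulVec_nonneg y
  have h1 : y ⬝ᵥ (A *ᵥ y) = -(t * (y ⬝ᵥ y)) := by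
    rw [hAy]
    simp [dotProduct_smul]
  have h2 : t * (y ⬝ᵥ y) ≤ 0 := by linarith [h0, h1]
  have hyy : 0 ≤ y ⬝ᵥ y := by
    simp only [dotProduct]
    exact Finset.sum_nonneg fun i _ => mul_self_nonneg (y i)
  have h3 : t * (y ⬝ᵥ y) = 0 := le_antisymm h2 (mul_nonneg ht0 hyy)
  have hy0 : y = 0 := by
    rcases mul_eq_zero.mp h3 with ht' | hyy'
    · -- t = 0 forces A *ᵥ b = 0
      have hμ' : hB.eigenvalues k = 0 := by rw [ht2, ht', pow_two, mul_zero]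
      have hvm : b ᵥ* A = A *ᵥ b := by
        conv_lhs => rw [← hAT]
        rw [Matrix.vecMul_transpose]
      have hABb : (A *ᵥ b) ⬝ᵥ (A *ᵥ b) = 0 := by
        calc (A *ᵥ b) ⬝ᵥ (A *ᵥ b) = (b ᵥ* A) ⬝ᵥ (A *ᵥ b) := by rw [hvm]
          _ = b ⬝ᵥ (A *ᵥ (A *ᵥ b)) := (Matrix.dotProduct_mulVec b A (A *ᵥ b)).symm
          _ = 0 := by rw [hBb, hμ']; simp
      have hAb : A *ᵥ b = 0 := dotProduct_self_eq_zero.mp hABb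
      rw [hy, hAb, ht']
      simp
    · exact dotProduct_self_eq_zero.mp hyy'
  have h6 : A *ᵥ b - t • b = 0 := by rw [← hy]; exact hy0
  exact sub_eq_zero.mp h6

end helpers2

section helpers3
variable {d : ℕ}

lemma dp_self_nonneg (x : Fin d → ℝ) : 0 ≤ x ⬝ᵥ x := by
  simp only [dotProduct]
  exact Finset.sum_nonneg fun i _ => mul_self_nonneg (x i)

lemma qf_abs_le (E : Matrix (Fin d) (Fin d) ℝ) (x : Fin d → ℝ) :
    |x ⬝ᵥ E *ᵥ x| ≤ specNorm E * (x ⬝ᵥ x) := by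
  classical
  set hB := Matrix.isHermitian_conjTranspose_mul_self E with hhB
  set N := specNorm E with hN
  have hN0 : 0 ≤ N := Real.iSup_nonneg fun k => Real.sqrt_nonneg _
  have hbon := eigbasis_on hB
  have hbeig : ∀ k, (Eᴴ * E) *ᵥ ⇑(hB.eigenvectorBasis k)
      = hB.eigenvalues k • ⇑(hB.eigenvectorBasis k) := hB.mulVec_eigenvectorBasis
  have hqf := qf_formula hbon hbeig x
  have hps : (Eᴴ * E).PosSemidef := Matrix.posSemidef_conjTranspose_mul_self E
  have hterm : ∀ k, hB.eigenvalues k * (⇑(hB.eigenvectorBasis k) ⬝ᵥ x) ^ 2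
      ≤ N ^ 2 * (⇑(hB.eigenvectorBasis k) ⬝ᵥ x) ^ 2 := by
    intro k
    have h1 : 0 ≤ hB.eigenvalues k := hps.eigenvalues_nonneg k
    have h2 : sval E k ≤ N := by
      rw [hN, specNorm]
      exact le_ciSup (Finite.bddAbove_range _) k
    have h3 : hB.eigenvalues k ≤ N ^ 2 := by
      have h4 : hB.eigenvalues k = (sval E k) ^ 2 := (Real.sq_sqrt h1).symm
      rw [h4]
      exact pow_le_pow_left₀ (Real.sqrt_nonneg _) h2 2
    exact mul_le_mul_of_nonneg_right h3 (sq_nonneg _)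
  have hupper : x ⬝ᵥ (Eᴴ * E) *ᵥ x ≤ N ^ 2 * (x ⬝ᵥ x) := by
    rw [hqf]
    calc ∑ k, hB.eigenvalues k * (⇑(hB.eigenvectorBasis k) ⬝ᵥ x) ^ 2
        ≤ ∑ k, N ^ 2 * (⇑(hB.eigenvectorBasis k) ⬝ᵥ x) ^ 2 :=
          Finset.sum_le_sum fun k _ => hterm k
      _ = N ^ 2 * ∑ k, (⇑(hB.eigenvectorBasis k) ⬝ᵥ x) ^ 2 := by rw [Finset.mul_sum]
      _ = N ^ 2 * (x ⬝ᵥ x) := by rw [on_parseval hbon x]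
  have hEx : (E *ᵥ x) ⬝ᵥ (E *ᵥ x) = x ⬝ᵥ (Eᴴ * E) *ᵥ x := by
    have h1 : x ⬝ᵥ (Eᴴ * E) *ᵥ x = (x ᵥ* Eᵀ) ⬝ᵥ (E *ᵥ x) := by
      rw [Matrix.conjTranspose_eq_transpose_of_trivial, ← Matrix.mulVec_mulVec,
        Matrix.dotProduct_mulVec]
    rw [h1, Matrix.vecMul_transpose]
  have hcs : (x ⬝ᵥ (E *ᵥ x)) ^ 2 ≤ (x ⬝ᵥ x) * ((E *ᵥ x) ⬝ᵥ (E *ᵥ x)) := by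
    have h := Finset.sum_mul_sq_le_sq_mul_sq Finset.univ x (E *ᵥ x)
    simp only [dotProduct, ← sq]
    convert h using 2 <;> simp [sq]
  have hxx : 0 ≤ x ⬝ᵥ x := dp_self_nonneg x
  have h2 : (x ⬝ᵥ E *ᵥ x) ^ 2 ≤ (N * (x ⬝ᵥ x)) ^ 2 := by
    calc (x ⬝ᵥ E *ᵥ x) ^ 2 ≤ (x ⬝ᵥ x) * ((E *ᵥ x) ⬝ᵥ (E *ᵥ x)) := hcs
      _ = (x ⬝ᵥ x) * (x ⬝ᵥ (Eᴴ * E) *ᵥ x) := by rw [hEx]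
      _ ≤ (x ⬝ᵥ x) * (N ^ 2 * (x ⬝ᵥ x)) := mul_le_mul_of_nonneg_left hupper hxx
      _ = (N * (x ⬝ᵥ x)) ^ 2 := by ring
  calc |x ⬝ᵥ E *ᵥ x| = Real.sqrt ((x ⬝ᵥ E *ᵥ x) ^ 2) := (Real.sqrt_sq_eq_abs _).symm
    _ ≤ Real.sqrt ((N * (x ⬝ᵥ x)) ^ 2) := Real.sqrt_le_sqrt h2
    _ = |N * (x ⬝ᵥ x)| := Real.sqrt_sq_eq_abs _
    _ = N * (x ⬝ᵥ x) := abs_of_nonneg (mul_nonneg hN0 hxx)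

end helpers3

section helpers4
variable {d : ℕ}

lemma finrank_span_on {v : Fin d → Fin d → ℝ}
    (hv : ∀ i j, v i ⬝ᵥ v j = if i = j then (1:ℝ) else 0) (S : Finset (Fin d)) :
    Module.finrank ℝ (Submodule.span ℝ (v '' ↑S)) = S.card := by
  classical
  have hli : LinearIndependent ℝ (fun k : {x : Fin d // x ∈ S} => v ↑k) :=
    (on_li hv).comp _ Subtype.val_injective
  have him : v '' ↑S = Set.range (fun k : {x : Fin d // x ∈ S} => v ↑k) := by
    ext y
    simp [Set.mem_image, Set.mem_range, Subtype.exists]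
  rw [him, finrank_span_eq_card hli, Fintype.card_coe]

end helpers4

section helpers5
variable {d : ℕ}

lemma sum_smul_vmv_mulVec (c : Fin d → ℝ) (v : Fin d → Fin d → ℝ) (x : Fin d → ℝ) :
    (∑ k, c k • Matrix.vecMulVec (v k) (v k)) *ᵥ x = ∑ k, (c k * (v k ⬝ᵥ x)) • v k := by
  funext i
  simp only [Matrix.mulVec, dotProduct, Finset.sum_apply, Matrix.sum_apply,
    Matrix.smul_apply, Matrix.vecMulVec_apply, smul_eq_mul, Finset.sum_mul, Finset.mul_sum,
    Pi.smul_apply]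
  rw [Finset.sum_comm]
  exact Finset.sum_congr rfl fun k _ => Finset.sum_congr rfl fun j _ => by ring

end helpers5


/-- If the shrinkage level lies between the estimation error and the smallest
non-zero eigenvalue, the soft-thresholded estimator recovers the rank exactly. -/
theorem rank_recovery {d : ℕ}
    (Sig Shat : Matrix (Fin d) (Fin d) ℝ)
    (hSig : Sig.PosSemidef) (hShatP : Shat.PosSemidef)
    (sv : Fin d → ℝ) (u : Fin d → (Fin d → ℝ)) (hsv : ∀ k, 0 ≤ sv k)
    (hu : ∀ i j, u i ⬝ᵥ u j = if i = j then (1 : ℝ) else 0)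
    (hShat : Shat = ∑ k, sv k • Matrix.vecMulVec (u k) (u k))
    (lbar lam s : ℝ)
    (hclose : 2 * specNorm (Shat - Sig) ≤ lbar)
    (hspos : 0 < s) (hsmem : ∃ k, sval Sig k = s)
    (hsmin : ∀ k, sval Sig k ≠ 0 → s ≤ sval Sig k)
    (hlam : lbar < lam) (hlam2 : lam ≤ s)
    (Slam : Matrix (Fin d) (Fin d) ℝ)
    (hSlam : Slam = ∑ k, max (sv k - lam / 2) 0 • Matrix.vecMulVec (u k) (u k)) :
    Slam.rank = Sig.rank := by
  classical
  -- eigen decomposition of Sig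
  set b : Fin d → Fin d → ℝ :=
    fun k => ⇑((Matrix.isHermitian_conjTranspose_mul_self Sig).eigenvectorBasis k) with hbdef
  have hbon : ∀ i j, b i ⬝ᵥ b j = if i = j then (1:ℝ) else 0 :=
    eigbasis_on (Matrix.isHermitian_conjTranspose_mul_self Sig)
  have hbeig : ∀ k, Sig *ᵥ b k = sval Sig k • b k := psd_mulVec_eigen hSig
  -- eigen relations for Shat and Slam
  have hueig : ∀ j, Shat *ᵥ u j = sv j • u j := by
    intro j
    rw [hShat, sum_smul_vmv_mulVec]
    simp [hu, mul_ite]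
  have hleig : ∀ j, Slam *ᵥ u j = max (sv j - lam / 2) 0 • u j := by
    intro j
    rw [hSlam, sum_smul_vmv_mulVec]
    simp [hu, mul_ite]
  -- index sets
  set T : Finset (Fin d) := Finset.univ.filter (fun k => lam / 2 < sv k) with hT
  set S0 : Finset (Fin d) := Finset.univ.filter (fun k => sval Sig k ≠ 0) with hS0
  -- ranks via spans
  have hrangeSig : LinearMap.range Sig.mulVecLin = Submodule.span ℝ (b '' ↑S0) := by
    rw [range_eq hbon hbeig]
    congr 1
    ext k
    simp [hS0]
  have hrangeSlam : LinearMap.range Slam.mulVecLin = Submodule.span ℝ (u '' ↑T) := by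
    rw [range_eq hu hleig]
    congr 1
    ext y
    constructor
    · rintro ⟨k, hk, rfl⟩
      refine ⟨k, ?_, rfl⟩
      simp only [hT, Finset.coe_filter, Finset.mem_univ, true_and, Set.mem_setOf_eq]
      by_contra hc
      push_neg at hc
      exact hk (max_eq_right (by linarith))
    · rintro ⟨k, hk, rfl⟩
      refine ⟨k, ?_, rfl⟩
      simp only [hT, Finset.coe_filter, Finset.mem_univ, true_and, Set.mem_setOf_eq] at hk
      have : 0 < max (sv k - lam / 2) 0 := lt_max_of_lt_left (by linarith)
      exact this.ne'
  have hrSig : Sig.rank = S0.card := by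
    rw [Matrix.rank, hrangeSig, finrank_span_on hbon S0]
  have hrSlam : Slam.rank = T.card := by
    rw [Matrix.rank, hrangeSlam, finrank_span_on hu T]
  -- error matrix bound
  set E : Matrix (Fin d) (Fin d) ℝ := Shat - Sig with hE
  have hNle : specNorm E ≤ lbar / 2 := by linarith
  have hsplit : ∀ x : Fin d → ℝ, x ⬝ᵥ Shat *ᵥ x = x ⬝ᵥ Sig *ᵥ x + x ⬝ᵥ E *ᵥ x := by
    intro x
    rw [hE, Matrix.sub_mulVec, dotProduct_sub]
    ring
  have hxxpos : ∀ x : Fin d → ℝ, x ≠ 0 → 0 < x ⬝ᵥ x := by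
    intro x hx
    rcases lt_or_eq_of_le (dp_self_nonneg x) with h | h
    · exact h
    · exact absurd (dotProduct_self_eq_zero.mp h.symm) hx
  -- Claim A : S0.card ≤ T.card
  have hdisj1 : Disjoint (Submodule.span ℝ (b '' ↑S0)) (Submodule.span ℝ (u '' ↑(Tᶜ))) := by
    rw [Submodule.disjoint_def]
    intro x hx1 hx2
    by_contra hx0
    have hxx := hxxpos x hx0
    have hlow : s * (x ⬝ᵥ x) ≤ x ⬝ᵥ Sig *ᵥ x := by
      rw [qf_formula hbon hbeig x, ← on_parseval hbon x, Finset.mul_sum]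
      refine Finset.sum_le_sum fun k _ => ?_
      by_cases hk : sval Sig k = 0
      · have hbk : b k ⬝ᵥ x = 0 :=
          on_span_dp_zero hbon _ (by simp [hS0, hk]) hx1
        simp [hk, hbk]
      · exact mul_le_mul_of_nonneg_right (hsmin k hk) (sq_nonneg _)
    have hup : x ⬝ᵥ Shat *ᵥ x ≤ lam / 2 * (x ⬝ᵥ x) := by
      rw [qf_formula hu hueig x, ← on_parseval hu x, Finset.mul_sum]
      refine Finset.sum_le_sum fun k _ => ?_
      by_cases hk : k ∈ T
      · have hzk : u k ⬝ᵥ x = 0 :=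
          on_span_dp_zero hu (↑(Tᶜ)) (by simp [hk]) hx2
        simp [hzk]
      · have hsvk : sv k ≤ lam / 2 := by
          simp only [hT, Finset.mem_filter, Finset.mem_univ, true_and, not_lt] at hk
          exact hk
        exact mul_le_mul_of_nonneg_right hsvk (sq_nonneg _)
    have hqE := qf_abs_le E x
    have hEge : -(lbar / 2 * (x ⬝ᵥ x)) ≤ x ⬝ᵥ E *ᵥ x := by
      have h1 : specNorm E * (x ⬝ᵥ x) ≤ lbar / 2 * (x ⬝ᵥ x) :=
        mul_le_mul_of_nonneg_right hNle hxx.le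
      have h2 := neg_abs_le (x ⬝ᵥ E *ᵥ x)
      linarith
    have hkey : (s - lbar / 2 - lam / 2) * (x ⬝ᵥ x) ≤ 0 := by
      have := hsplit x
      nlinarith
    have hc1 : 0 < s - lbar / 2 - lam / 2 := by linarith
    nlinarith
  have hcA := Submodule.finrank_add_finrank_le_of_disjoint hdisj1
  rw [finrank_span_on hbon S0, finrank_span_on hu (Tᶜ), Module.finrank_pi, Fintype.card_fin] at hcA
  -- Claim B : T.card ≤ S0.card
  have hdisj2 : Disjoint (Submodule.span ℝ (u '' ↑T)) (LinearMap.ker Sig.mulVecLin) := by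
    rw [Submodule.disjoint_def]
    intro x hx1 hx2
    by_contra hx0
    have hxx := hxxpos x hx0
    have hker : Sig *ᵥ x = 0 := by
      have := LinearMap.mem_ker.mp hx2
      rwa [Matrix.mulVecLin_apply] at this
    have hpos : 0 < ∑ k, (sv k - lam / 2) * (u k ⬝ᵥ x) ^ 2 := by
      apply Finset.sum_pos'
      · intro k _
        by_cases hk : k ∈ T
        · have : lam / 2 < sv k := by
            simp only [hT, Finset.mem_filter, Finset.mem_univ, true_and] at hk
            exact hk
          exact mul_nonneg (by linarith) (sq_nonneg _)
        · have hzk : u k ⬝ᵥ x = 0 := on_span_dp_zero hu (↑T) (by simpa) hx1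
          simp [hzk]
      · have hex : ∃ k, u k ⬝ᵥ x ≠ 0 := by
          by_contra hc
          push_neg at hc
          apply hx0
          have := on_expansion hu x
          rw [← this]
          simp [hc]
        obtain ⟨k, hk⟩ := hex
        have hkT : k ∈ T := by
          by_contra hkc
          exact hk (on_span_dp_zero hu (↑T) (by simpa) hx1)
        refine ⟨k, Finset.mem_univ k, ?_⟩
        have hsvk : lam / 2 < sv k := by
          simp only [hT, Finset.mem_filter, Finset.mem_univ, true_and] at hkT
          exact hkT
        exact mul_pos (by linarith) (sq_pos_of_ne_zero hk)
    have hexp : ∑ k, (sv k - lam / 2) * (u k ⬝ᵥ x) ^ 2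
        = x ⬝ᵥ Shat *ᵥ x - lam / 2 * (x ⬝ᵥ x) := by
      rw [qf_formula hu hueig x, ← on_parseval hu x, Finset.mul_sum,
        ← Finset.sum_sub_distrib]
      refine Finset.sum_congr rfl fun k _ => ?_
      ring
    have hupE : x ⬝ᵥ Shat *ᵥ x ≤ lbar / 2 * (x ⬝ᵥ x) := by
      have h0 := hsplit x
      have h1 : x ⬝ᵥ Sig *ᵥ x = 0 := by rw [hker]; simp
      have hqE := qf_abs_le E x
      have h2 : specNorm E * (x ⬝ᵥ x) ≤ lbar / 2 * (x ⬝ᵥ x) :=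
        mul_le_mul_of_nonneg_right hNle hxx.le
      have h3 := le_abs_self (x ⬝ᵥ E *ᵥ x)
      linarith
    have hlt : lbar / 2 * (x ⬝ᵥ x) < lam / 2 * (x ⬝ᵥ x) :=
      mul_lt_mul_of_pos_right (by linarith) hxx
    linarith
  have hcB := Submodule.finrank_add_finrank_le_of_disjoint hdisj2
  rw [finrank_span_on hu T, Module.finrank_pi, Fintype.card_fin] at hcB
  have hrn : Sig.rank + Module.finrank ℝ (LinearMap.ker Sig.mulVecLin) = d := by
    have := LinearMap.finrank_range_add_finrank_ker Sig.mulVecLin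
    rw [Module.finrank_pi, Fintype.card_fin] at this
    exact this
  have hcompl := Finset.card_add_card_compl T
  rw [Fintype.card_fin] at hcompl
  rw [hrSig, hrSlam] at *
  omega
end
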